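/- For every constant c > 3/8 there exist functions h(z) = Σ_{k=0}^∞ a_k z^k and g(z) = Σ_{k=1}^∞ b_k z^k analytic on the unit disk 𝔻 with |h(z)| ≤ 1 and |g'(z)| ≤ |h'(z)| for all z ∈ 𝔻, such that |a_0| + Σ_{k=1}^∞ (|a_k| + |b_k|) (1/5)^k + c · Σ_{k=1}^∞ (|a_k|² + |b_k|²) (1/5)^k > 1. (In particular, the constant 3/8 at radius 1/5 cannot be improved.) -/

import Mathlib

open Metric

set_option maxHeartbeats 1000000

/-- Sharpness of the constant `3/8`: for every `c > 3/8` there are `h, g` analytic on the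
unit disk with `|h| ≤ 1` and `|g'| ≤ |h'|` for which the corresponding sum at `r = 1/5`
with constant `c` exceeds `1`. -/
theorem stmt5 (c : ℝ) (hc : 3/8 < c) :
    ∃ (h g : ℂ → ℂ) (a b : ℕ → ℂ), b 0 = 0 ∧
      (∀ z ∈ ball (0:ℂ) 1, HasSum (fun k => a k * z ^ k) (h z)) ∧
      (∀ z ∈ ball (0:ℂ) 1, HasSum (fun k => b k * z ^ k) (g z)) ∧
      DifferentiableOn ℂ h (ball (0:ℂ) 1) ∧
      DifferentiableOn ℂ g (ball (0:ℂ) 1) ∧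
      (∀ z ∈ ball (0:ℂ) 1, ‖h z‖ ≤ 1) ∧
      (∀ z ∈ ball (0:ℂ) 1, ‖deriv g z‖ ≤ ‖deriv h z‖) ∧
      1 < ‖a 0‖
        + (∑' k : ℕ, (‖a (k+1)‖ + ‖b (k+1)‖) * (1/5 : ℝ) ^ (k+1))
        + c * ∑' k : ℕ,
            ((‖a (k+1)‖)^2 + (‖b (k+1)‖)^2) * (1/5 : ℝ) ^ (k+1) := by
  -- Choose ε small depending on c, and set a = 1 - ε.
  set ε : ℝ := min (c - 3/8) (1/8) with hεdef
  have hε0 : 0 < ε := lt_min (by linarith) (by norm_num)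
  have hε8 : ε ≤ 1/8 := min_le_right _ _
  have hεc : 3/8 + ε ≤ c := by
    have := min_le_left (c - 3/8) (1/8); linarith
  set t : ℝ := 1 - ε with htdef
  have ht0 : 0 < t := by simp only [htdef]; linarith
  have ht1 : t < 1 := by simp only [htdef]; linarith
  set α : ℂ := (t : ℂ) with hαdef
  have hαabs : ‖α‖ = t := by
    rw [hαdef, Complex.norm_real, Real.norm_eq_abs, abs_of_pos ht0]
  -- the functions
  set h : ℂ → ℂ := fun z => (α + z) / (1 + α * z) with hhdef
  set g : ℂ → ℂ := fun z => (α + z) / (1 + α * z) - α with hgdef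
  set A : ℕ → ℂ := fun k => match k with
    | 0 => α
    | k + 1 => (1 - α ^ 2) * (-α) ^ k with hAdef
  set B : ℕ → ℂ := fun k => match k with
    | 0 => 0
    | k + 1 => (1 - α ^ 2) * (-α) ^ k with hBdef
  -- denominator never vanishes
  have hden : ∀ z ∈ ball (0:ℂ) 1, 1 + α * z ≠ 0 := by
    intro z hz
    have hz1 : ‖z‖ < 1 := by simpa using hz
    have : ‖α * z‖ < 1 := by
      rw [norm_mul, hαabs]
      calc t * ‖z‖ ≤ 1 * ‖z‖ :=
            mul_le_mul_of_nonneg_right ht1.le (norm_nonneg z)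
        _ < 1 := by simpa using hz1
    intro hzero
    have : ‖α * z‖ = 1 := by
      have : α * z = -1 := by linear_combination hzero
      simp [this]
    linarith
  have hnorm : ∀ z ∈ ball (0:ℂ) 1, ‖-α * z‖ < 1 := by
    intro z hz
    have hz1 : ‖z‖ < 1 := by simpa using hz
    have : ‖-α * z‖ = t * ‖z‖ := by
      simp [norm_mul, hαabs]
    rw [this]
    calc t * ‖z‖ ≤ 1 * ‖z‖ :=
          mul_le_mul_of_nonneg_right ht1.le (norm_nonneg z)
      _ < 1 := by simpa using hz1
  -- tail sums
  have tail : ∀ z ∈ ball (0:ℂ) 1,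
      HasSum (fun k : ℕ => A (k + 1) * z ^ (k + 1)) ((1 - α ^ 2) * z * (1 + α * z)⁻¹) := by
    intro z hz
    have h1 : HasSum (fun k : ℕ => (-α * z) ^ k) (1 - (-α * z))⁻¹ :=
      hasSum_geometric_of_norm_lt_one (hnorm z hz)
    have h2 := h1.mul_left ((1 - α ^ 2) * z)
    have e1 : (1 : ℂ) - (-α * z) = 1 + α * z := by ring
    rw [e1] at h2
    convert h2 using 2 with k
    · rfl
    simp only [hAdef]
    rw [mul_pow, pow_succ]
    ring
  have hsumA : ∀ z ∈ ball (0:ℂ) 1, HasSum (fun k => A k * z ^ k) (h z) := by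
    intro z hz
    have h2 := (hasSum_nat_add_iff (f := fun k => A k * z ^ k) 1).mp (tail z hz)
    have e2 : (1 - α ^ 2) * z * (1 + α * z)⁻¹ + ∑ i ∈ Finset.range 1, A i * z ^ i
        = h z := by
      rw [Finset.sum_range_one]
      simp only [hhdef, hAdef, pow_zero, mul_one]
      field_simp [hden z hz]
      ring
    rwa [e2] at h2
  have hsumB : ∀ z ∈ ball (0:ℂ) 1, HasSum (fun k => B k * z ^ k) (g z) := by
    intro z hz
    have tb : HasSum (fun k : ℕ => B (k + 1) * z ^ (k + 1))
        ((1 - α ^ 2) * z * (1 + α * z)⁻¹) := by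
      convert tail z hz using 2 with k
    have h2 := (hasSum_nat_add_iff (f := fun k => B k * z ^ k) 1).mp tb
    have e2 : (1 - α ^ 2) * z * (1 + α * z)⁻¹ + ∑ i ∈ Finset.range 1, B i * z ^ i
        = g z := by
      rw [Finset.sum_range_one]
      simp only [hgdef, hBdef, pow_zero, mul_one]
      field_simp [hden z hz]
      ring
    rwa [e2] at h2
  -- differentiability
  have hdiffh : DifferentiableOn ℂ h (ball (0:ℂ) 1) := by
    apply DifferentiableOn.div
    · exact (differentiable_const α).differentiableOn.add differentiable_id.differentiableOn
    · exact (differentiable_const (1:ℂ)).differentiableOn.add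
        ((differentiable_const α).mul differentiable_id).differentiableOn
    · exact hden
  have hdiffg : DifferentiableOn ℂ g (ball (0:ℂ) 1) :=
    hdiffh.sub (differentiable_const α).differentiableOn
  -- modulus bound
  have hmod : ∀ z ∈ ball (0:ℂ) 1, ‖h z‖ ≤ 1 := by
    intro z hz
    have hz1 : ‖z‖ < 1 := by simpa using hz
    have hzsq : Complex.normSq z < 1 := by
      have := Complex.sq_norm z
      nlinarith [norm_nonneg z]
    have hnum : Complex.normSq (α + z) ≤ Complex.normSq (1 + α * z) := by
      simp only [Complex.normSq_apply, Complex.add_re, Complex.add_im, Complex.mul_re,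
        Complex.mul_im, Complex.one_re, Complex.one_im, hαdef, Complex.ofReal_re,
        Complex.ofReal_im]
      have hz2 : z.re ^ 2 + z.im ^ 2 < 1 := by
        have : Complex.normSq z = z.re * z.re + z.im * z.im := Complex.normSq_apply z
        nlinarith
      nlinarith [mul_nonneg (by nlinarith : (0:ℝ) ≤ 1 - t ^ 2)
        (by nlinarith : (0:ℝ) ≤ 1 - z.re ^ 2 - z.im ^ 2)]
    have hd := hden z hz
    rw [hhdef]
    simp only
    rw [norm_div, div_le_one (norm_pos_iff.mpr hd)]
    rw [Complex.norm_def, Complex.norm_def]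
    exact Real.sqrt_le_sqrt hnum
  -- derivative equality
  have hderiv : ∀ z ∈ ball (0:ℂ) 1, ‖deriv g z‖ ≤ ‖deriv h z‖ := by
    intro z _
    have : deriv g z = deriv h z := by
      rw [hgdef, hhdef]
      exact deriv_sub_const α
    rw [this]
  -- coefficient moduli
  have habsA : ∀ k : ℕ, ‖A (k + 1)‖ = (1 - t ^ 2) * t ^ k := by
    intro k
    simp only [hAdef]
    rw [norm_mul, norm_pow, norm_neg, hαabs]
    congr 1
    have : (1 : ℂ) - α ^ 2 = ((1 - t ^ 2 : ℝ) : ℂ) := by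
      rw [hαdef]; push_cast; ring
    rw [this, Complex.norm_real, Real.norm_eq_abs, abs_of_pos (by nlinarith)]
  have habsB : ∀ k : ℕ, ‖B (k + 1)‖ = (1 - t ^ 2) * t ^ k := habsA
  -- the two infinite sums
  have ht2 : 0 < 1 - t ^ 2 := by nlinarith
  have hs1 : HasSum (fun k : ℕ => (‖A (k+1)‖ + ‖B (k+1)‖) * (1/5 : ℝ) ^ (k+1))
      (2 * (1 - t ^ 2) / 5 * (1 - t / 5)⁻¹) := by
    have hgeo : HasSum (fun k : ℕ => (t / 5) ^ k) (1 - t / 5)⁻¹ :=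
      hasSum_geometric_of_lt_one (by positivity) (by linarith)
    have := hgeo.mul_left (2 * (1 - t ^ 2) / 5)
    convert this using 2 with k
    · rfl
    rw [habsA, show t / 5 = t * (1/5) by ring, mul_pow]
    ring
  have hs2 : HasSum (fun k : ℕ => ((‖A (k+1)‖)^2 + (‖B (k+1)‖)^2) * (1/5 : ℝ) ^ (k+1))
      (2 * (1 - t ^ 2) ^ 2 / 5 * (1 - t ^ 2 / 5)⁻¹) := by
    have hgeo : HasSum (fun k : ℕ => (t ^ 2 / 5) ^ k) (1 - t ^ 2 / 5)⁻¹ :=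
      hasSum_geometric_of_lt_one (by positivity) (by nlinarith)
    have := hgeo.mul_left (2 * (1 - t ^ 2) ^ 2 / 5)
    convert this using 2 with k
    · rfl
    simp only [habsA, habsB, show t ^ 2 / 5 = t ^ 2 * (1/5) by ring, mul_pow, ← pow_mul]
    ring_nf
  -- the final numeric inequality
  have habs0 : ‖A 0‖ = t := hαabs
  have h5t : (0:ℝ) < 5 - t := by linarith
  have h5t2 : (0:ℝ) < 5 - t ^ 2 := by nlinarith
  have key : 1 < t + 2 * (1 - t ^ 2) / 5 * (1 - t / 5)⁻¹
      + c * (2 * (1 - t ^ 2) ^ 2 / 5 * (1 - t ^ 2 / 5)⁻¹) := by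
    rw [← sub_pos]
    have e1 : (1 : ℝ) - t / 5 = (5 - t) / 5 := by ring
    have e2 : (1 : ℝ) - t ^ 2 / 5 = (5 - t ^ 2) / 5 := by ring
    have expand : t + 2 * (1 - t ^ 2) / 5 * (1 - t / 5)⁻¹
        + c * (2 * (1 - t ^ 2) ^ 2 / 5 * (1 - t ^ 2 / 5)⁻¹) - 1
        = (2 * c * (2 - ε) ^ 2 * (4 + ε) - 3 * (4 + 2 * ε - ε ^ 2)) * ε ^ 2
            / ((5 - t) * (5 - t ^ 2)) := by
      rw [e1, e2, htdef]
      have h1 : (5 : ℝ) - (1 - ε) ≠ 0 := by rw [htdef] at h5t; linarith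
      have h2 : (5 : ℝ) - (1 - ε) ^ 2 ≠ 0 := by rw [htdef] at h5t2; nlinarith
      field_simp
      ring
    rw [expand]
    apply div_pos _ (mul_pos h5t h5t2)
    have hfac : (0:ℝ) < (2 - ε) ^ 2 * (4 + ε) := by nlinarith
    have hstep : (3/4 + 2*ε) * ((2 - ε) ^ 2 * (4 + ε)) ≤ 2 * c * ((2 - ε) ^ 2 * (4 + ε)) :=
      mul_le_mul_of_nonneg_right (by linarith) hfac.le
    have hlow : (0:ℝ) < (3/4 + 2*ε) * ((2 - ε) ^ 2 * (4 + ε)) - 3 * (4 + 2 * ε - ε ^ 2) := by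
      have hpos : (0:ℝ) < 17 - 21*ε + (3/4)*ε^2 + 2*ε^3 := by
        nlinarith [pow_pos hε0 2, pow_pos hε0 3]
      nlinarith [mul_pos hε0 hpos]
    have hpoly : (0:ℝ) < 2 * c * (2 - ε) ^ 2 * (4 + ε) - 3 * (4 + 2 * ε - ε ^ 2) := by
      nlinarith
    positivity
  refine ⟨h, g, A, B, rfl, hsumA, hsumB, hdiffh, hdiffg, hmod, hderiv, ?_⟩
  rw [habs0, hs1.tsum_eq, hs2.tsum_eq]
  exact key
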